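/- Let E_ℏ be the left C_ℏ^∞-module S(ℝ×ℤ) with parameters λ₀ ≠ 0, λ₁, ε, r satisfying λ₀ε + λ₁r = −ℏ and r ≥ 1. Writing k = k₀r + k₁ with 0 ≤ k₁ ≤ r−1, the map φ : (C_ℏ^∞)^r → E_ℏ defined by φ(F)(x,k) = F^{k₁}_{k₀}(λ₀x + λ₁k) (where F^j = Σ_n F^j_n(u)W^n) is an isomorphism of left C_ℏ^∞-modules. -/

import Mathlib

/-- The twisted product `(f • g)_n(u) = ∑_k f_k(u) g_{n-k}(u + kℏ)`. -/
noncomputable def ncProd (ℏ : ℝ) (f g : ℤ → ℝ → ℂ) : ℤ → ℝ → ℂ :=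
  fun n u => ∑' k : ℤ, f k u * g (n - k) (u + k * ℏ)

/-- The left action `(f·ξ)(x,k) = ∑_n f_n(λ₀x + λ₁k) ξ(x − nε, k − nr)`. -/
noncomputable def leftAct (l0 l1 ε : ℝ) (r : ℤ) (f : ℤ → ℝ → ℂ) (ξ : ℝ → ℤ → ℂ) :
    ℝ → ℤ → ℂ :=
  fun x k => ∑' n : ℤ, f n (l0 * x + l1 * k) * ξ (x - n * ε) (k - n * r)

/-- Schwartz-type decay for an algebra element, jointly in `(n, u)`. -/
def JScoeff (F : ℤ → ℝ → ℂ) : Prop :=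
  ∀ N : ℕ, ∃ C : ℝ, ∀ (n : ℤ) (u : ℝ),
    (1 + |u| + |(n : ℝ)|) ^ N * ‖F n u‖ ≤ C

/-- Schwartz-type decay for a module element, jointly in `(x, k)`. -/
def JSmod (ξ : ℝ → ℤ → ℂ) : Prop :=
  ∀ N : ℕ, ∃ C : ℝ, ∀ (x : ℝ) (k : ℤ),
    (1 + |x| + |(k : ℝ)|) ^ N * ‖ξ x k‖ ≤ C

/-- The map `φ(F)(x,k) = F^{k₁}_{k₀}(λ₀x + λ₁k)`, where `k = k₀ r + k₁` with
`0 ≤ k₁ ≤ r − 1` (the class of `k` in `ZMod r` and the floor quotient `k / r`). -/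
noncomputable def phiMap (r : ℕ) (l0 l1 : ℝ) (F : ZMod r → ℤ → ℝ → ℂ) : ℝ → ℤ → ℂ :=
  fun x k => F (k : ZMod r) (k / (r : ℤ)) (l0 * x + l1 * k)

section Aux

lemma enc_cast (r : ℕ) [NeZero r] (j : ZMod r) (n : ℤ) :
    (((n * r + (j.val : ℤ)) : ℤ) : ZMod r) = j := by
  push_cast
  simp [ZMod.natCast_self, ZMod.natCast_rightInverse j]

lemma enc_div (r : ℕ) [NeZero r] (j : ZMod r) (n : ℤ) :
    (n * r + (j.val : ℤ)) / (r : ℤ) = n := by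
  have hr0 : (r : ℤ) ≠ 0 := Int.natCast_ne_zero.mpr (NeZero.ne r)
  have h0 : (0 : ℤ) ≤ (j.val : ℤ) := Int.natCast_nonneg _
  have h1 : (j.val : ℤ) < r := by exact_mod_cast ZMod.val_lt j
  rw [add_comm, Int.add_mul_ediv_right _ _ hr0, Int.ediv_eq_zero_of_lt h0 h1, zero_add]

lemma enc_spec (r : ℕ) [NeZero r] (k : ℤ) :
    (k / (r : ℤ)) * r + (((k : ZMod r)).val : ℤ) = k := by
  rw [ZMod.val_intCast, mul_comm]
  exact Int.mul_ediv_add_emod k r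

/-- forward estimate -/
lemma est_fwd (r : ℕ) [NeZero r] (l0 l1 : ℝ) (hl0 : l0 ≠ 0) :
    ∃ D : ℝ, 0 ≤ D ∧ ∀ (x : ℝ) (k : ℤ),
      1 + |x| + |(k : ℝ)| ≤ D * (1 + |l0 * x + l1 * k| + |((k / (r : ℤ) : ℤ) : ℝ)|) := by
  have ha : 0 < |l0| := abs_pos.mpr hl0
  set a := |l0| with ha'
  refine ⟨(a + 1 + (|l1| + a) * r) / a, by positivity, fun x k => ?_⟩
  set u := l0 * x + l1 * k with hu
  set m := k / (r : ℤ) with hm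
  have hrpos : (0 : ℤ) < r := Int.natCast_pos.mpr (Nat.pos_of_ne_zero (NeZero.ne r))
  have hk : |(k : ℝ)| ≤ (r : ℝ) * (1 + |(m : ℝ)|) := by
    have h1 : k = (r : ℤ) * m + k % r := (Int.mul_ediv_add_emod k r).symm
    have h2 : (0 : ℤ) ≤ k % r := Int.emod_nonneg k (by omega)
    have h3 : k % r < r := Int.emod_lt_of_pos k hrpos
    have : |k| ≤ r * (1 + |m|) := by
      rcases abs_cases m with ⟨hm1, hm2⟩ | ⟨hm1, hm2⟩ <;> rcases abs_cases k with ⟨hk1, hk2⟩ | ⟨hk1, hk2⟩ <;> nlinarith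
    calc |(k : ℝ)| = ((|k| : ℤ) : ℝ) := by push_cast; rfl
    _ ≤ (((r * (1 + |m|) : ℤ) : ℝ)) := by exact_mod_cast this
    _ = (r : ℝ) * (1 + |(m : ℝ)|) := by push_cast; rfl
  have hx : a * |x| ≤ |u| + |l1| * |(k : ℝ)| := by
    have : l0 * x = u - l1 * k := by rw [hu]; ring
    calc a * |x| = |l0 * x| := (abs_mul l0 x).symm
    _ = |u - l1 * k| := by rw [this]
    _ ≤ |u| + |l1 * k| := abs_sub _ _
    _ = |u| + |l1| * |(k : ℝ)| := by rw [abs_mul]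
  rw [div_mul_eq_mul_div, le_div_iff₀ ha]
  have h1 : (0:ℝ) ≤ |u| := abs_nonneg _
  have h2 : (0:ℝ) ≤ |(m:ℝ)| := abs_nonneg _
  have h3 : (0:ℝ) ≤ |(k:ℝ)| := abs_nonneg _
  have h4 : (0:ℝ) ≤ |l1| := abs_nonneg _
  have h5 : (0:ℝ) ≤ |x| := abs_nonneg _
  have hk2 : (|l1| + a) * |(k:ℝ)| ≤ (|l1| + a) * ((r:ℝ) * (1 + |(m:ℝ)|)) :=
    mul_le_mul_of_nonneg_left hk (by positivity)
  nlinarith [hk2, mul_nonneg ha.le h1, mul_nonneg ha.le h2,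
    mul_nonneg (mul_nonneg (add_nonneg h4 ha.le) (Nat.cast_nonneg r : (0:ℝ) ≤ r)) h1,
    mul_nonneg (mul_nonneg (add_nonneg h4 ha.le) (Nat.cast_nonneg r : (0:ℝ) ≤ r)) h2]

/-- backward estimate -/
lemma est_bwd (l0 l1 : ℝ) (x : ℝ) (k n : ℤ) (hn : |n| ≤ |k|) :
    1 + |l0 * x + l1 * k| + |(n : ℝ)| ≤ (1 + |l0| + |l1|) * (1 + |x| + |(k : ℝ)|) := by
  have h1 : |l0 * x + l1 * (k : ℝ)| ≤ |l0| * |x| + |l1| * |(k : ℝ)| := by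
    calc |l0 * x + l1 * (k : ℝ)| ≤ |l0 * x| + |l1 * k| := abs_add_le _ _
    _ = |l0| * |x| + |l1| * |(k : ℝ)| := by rw [abs_mul, abs_mul]
  have h2 : |(n : ℝ)| ≤ |(k : ℝ)| := by
    calc |(n:ℝ)| = ((|n| : ℤ) : ℝ) := by push_cast; rfl
    _ ≤ ((|k| : ℤ) : ℝ) := by exact_mod_cast hn
    _ = |(k:ℝ)| := by push_cast; rfl
  have h3 : (0:ℝ) ≤ |x| := abs_nonneg _
  have h4 : (0:ℝ) ≤ |(k:ℝ)| := abs_nonneg _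
  have h5 : (0:ℝ) ≤ |l0| := abs_nonneg _
  have h6 : (0:ℝ) ≤ |l1| := abs_nonneg _
  nlinarith

end Aux

/-- `φ : (C_ℏ^∞)^r → E_ℏ` is an isomorphism of left modules: it is a bijection between
the Schwartz-type classes, and it intertwines the componentwise multiplication with
the left module action. -/
theorem phiMap_left_module_iso (ℏ l0 l1 ε : ℝ) (r : ℕ) (hr : 1 ≤ r)
    (hl0 : l0 ≠ 0) (hpar : l0 * ε + l1 * (r : ℝ) = -ℏ) :
    Set.BijOn (phiMap r l0 l1)
      {F : ZMod r → ℤ → ℝ → ℂ | ∀ j, JScoeff (F j)} {ξ | JSmod ξ} ∧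
    ∀ (f : ℤ → ℝ → ℂ), (Function.support f).Finite →
      ∀ F : ZMod r → ℤ → ℝ → ℂ,
        phiMap r l0 l1 (fun j => ncProd ℏ f (F j)) =
          leftAct l0 l1 ε (r : ℤ) f (phiMap r l0 l1 F) := by
  haveI : NeZero r := ⟨by omega⟩
  have hr0 : (r : ℤ) ≠ 0 := Int.natCast_ne_zero.mpr (NeZero.ne r)
  constructor
  · refine ⟨?_, ?_, ?_⟩
    · -- MapsTo
      intro F hF N
      obtain ⟨D, hD, hDest⟩ := est_fwd r l0 l1 hl0
      choose C hC using fun j => hF j N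
      refine ⟨D ^ N * ∑ j : ZMod r, max (C j) 0, fun x k => ?_⟩
      set j := ((k : ℤ) : ZMod r)
      set m := k / (r : ℤ)
      set u := l0 * x + l1 * k
      have hA : (0:ℝ) ≤ 1 + |x| + |(k:ℝ)| := by positivity
      have habs : (0:ℝ) ≤ ‖F j m u‖ := norm_nonneg _
      calc (1 + |x| + |(k : ℝ)|) ^ N * ‖phiMap r l0 l1 F x k‖
          = (1 + |x| + |(k : ℝ)|) ^ N * ‖F j m u‖ := rfl
        _ ≤ (D * (1 + |u| + |(m : ℝ)|)) ^ N * ‖F j m u‖ := by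
            exact mul_le_mul_of_nonneg_right (pow_le_pow_left₀ hA (hDest x k) N) habs
        _ = D ^ N * ((1 + |u| + |(m : ℝ)|) ^ N * ‖F j m u‖) := by
            rw [mul_pow]; ring
        _ ≤ D ^ N * C j := by
            exact mul_le_mul_of_nonneg_left (hC j m u) (by positivity)
        _ ≤ D ^ N * ∑ j' : ZMod r, max (C j') 0 := by
            refine mul_le_mul_of_nonneg_left ?_ (by positivity)
            calc C j ≤ max (C j) 0 := le_max_left _ _
            _ ≤ ∑ j' : ZMod r, max (C j') 0 :=
              Finset.single_le_sum (f := fun i => max (C i) 0)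
                (fun i _ => le_max_right _ _) (Finset.mem_univ j)
    · -- InjOn
      intro F _ G _ h
      funext j n u
      have hk : (((n * r + (j.val : ℤ)) : ℤ) : ZMod r) = j := enc_cast r j n
      have hd : (n * r + (j.val : ℤ)) / (r : ℤ) = n := enc_div r j n
      set k : ℤ := n * r + (j.val : ℤ) with hkdef
      have hx : l0 * ((u - l1 * (k : ℝ)) / l0) + l1 * k = u := by field_simp; ring
      have := congrFun (congrFun h ((u - l1 * (k : ℝ)) / l0)) k
      simpa [phiMap, hk, hd, hx] using this
    · -- SurjOn
      intro ξ hξ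
      refine ⟨fun j n u => ξ ((u - l1 * ((n * r + (j.val : ℤ) : ℤ) : ℝ)) / l0)
        (n * r + (j.val : ℤ)), ?_, ?_⟩
      · -- decay of the preimage
        intro j N
        obtain ⟨C, hC⟩ := hξ N
        refine ⟨(1 + |l0| + |l1|) ^ N * max C 0, fun n u => ?_⟩
        dsimp only
        set k : ℤ := n * r + (j.val : ℤ) with hkdef
        set x : ℝ := (u - l1 * (k : ℝ)) / l0 with hxdef
        have hx : l0 * x + l1 * k = u := by rw [hxdef]; field_simp; ring
        have hn : |n| ≤ |k| := by
          have := enc_div r j n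
          calc |n| = |k / (r:ℤ)| := by rw [hkdef, this]
          _ ≤ |k| := Int.abs_ediv_le_abs k r
        have hB : (0:ℝ) ≤ 1 + |x| + |(k:ℝ)| := by positivity
        have habs : (0:ℝ) ≤ ‖ξ x k‖ := norm_nonneg _
        calc (1 + |u| + |(n : ℝ)|) ^ N * ‖ξ x k‖
            = (1 + |l0 * x + l1 * k| + |(n : ℝ)|) ^ N * ‖ξ x k‖ := by rw [hx]
          _ ≤ ((1 + |l0| + |l1|) * (1 + |x| + |(k : ℝ)|)) ^ N * ‖ξ x k‖ := by
              refine mul_le_mul_of_nonneg_right (pow_le_pow_left₀ (by positivity) ?_ N) habs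
              exact est_bwd l0 l1 x k n hn
          _ = (1 + |l0| + |l1|) ^ N * ((1 + |x| + |(k : ℝ)|) ^ N * ‖ξ x k‖) := by
              rw [mul_pow]; ring
          _ ≤ (1 + |l0| + |l1|) ^ N * max C 0 := by
              refine mul_le_mul_of_nonneg_left ?_ (by positivity)
              exact le_trans (hC x k) (le_max_left _ _)
      · -- phiMap of the preimage is ξ
        funext x k
        have hk : (k / (r : ℤ)) * r + (((k : ZMod r)).val : ℤ) = k := enc_spec r k
        simp only [phiMap]
        rw [hk]
        congr 1
        field_simp
        ring
  · -- intertwining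
    intro f _ F
    funext x k
    simp only [phiMap, leftAct, ncProd]
    refine tsum_congr fun n => ?_
    congr 1
    have h1 : ((k - n * (r : ℤ) : ℤ) : ZMod r) = (k : ZMod r) := by
      push_cast
      simp [ZMod.natCast_self]
    have h2 : (k - n * (r : ℤ)) / (r : ℤ) = k / (r : ℤ) - n := by
      have : k - n * (r : ℤ) = k + (-n) * r := by ring
      rw [this, Int.add_mul_ediv_right _ _ hr0]
      ring
    have h3 : l0 * (x - n * ε) + l1 * ((k - n * (r : ℤ) : ℤ) : ℝ) =
        l0 * x + l1 * k + n * ℏ := by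
      push_cast
      linear_combination (-(n : ℝ)) * hpar
    rw [h1, h2, h3]
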